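/- arXiv:0912.4771 — 2 statements merged into one kernel-verified Lean document; each statement's English description precedes it below -/
import Mathlib

section
/- Let f be Lipschitz on X and let x be a periodic point with I(x) ≠ 0, where I(y) = n_y β(f) − f^{n_y}(y). Then lim_{ε→0} inf{ I(y) : y periodic, 0 < d(y,x) ≤ ε } = +∞. In particular the extension Ĩ(x) := lim_{ε→0} inf{I(y) : y periodic, d(y,x) ≤ ε} satisfies Ĩ(x) = I(x) for every periodic x. -/
open MeasureTheory Filter Real Topology
open scoped ENNReal

noncomputable section

abbrev X (d : ℕ) : Type := ℕ → Fin d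

def shift {d : ℕ} (x : X d) : X d := fun n => x (n + 1)

def birkhoff {d : ℕ} (f : X d → ℝ) (n : ℕ) (x : X d) : ℝ :=
  ∑ i ∈ Finset.range n, f (shift^[i] x)

def IsPeriodic {d : ℕ} (x : X d) : Prop := ∃ n, 0 < n ∧ shift^[n] x = x

def minPer {d : ℕ} (x : X d) : ℕ := Function.minimalPeriod shift x

def beta {d : ℕ} (f : X d → ℝ) : ℝ :=
  sSup {r : ℝ | ∃ μ : Measure (X d), IsProbabilityMeasure μ ∧ μ.map shift = μ ∧ r = ∫ x, f x ∂μ}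

def Ifun {d : ℕ} (f : X d → ℝ) (x : X d) : ℝ :=
  (minPer x : ℝ) * beta f - birkhoff f (minPer x) x

def dtheta {d : ℕ} (θ : ℝ) (x y : X d) : ℝ :=
  letI : Decidable (x = y) := Classical.dec _
  if h : x = y then 0 else θ ^ Nat.find (Function.ne_iff.mp h)

def LipWrt {d : ℕ} (θ C : ℝ) (f : X d → ℝ) : Prop :=
  ∀ x y, |f x - f y| ≤ C * dtheta θ x y

def periodize {d : ℕ} (n : ℕ) (w : Fin (n + 1) → Fin d) : X d :=
  fun i => w ⟨i % (n + 1), Nat.mod_lt i (Nat.succ_pos n)⟩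

def pressure {d : ℕ} (g : X d → ℝ) : ℝ :=
  Filter.limsup (fun n : ℕ =>
    Real.log (∑ w : Fin (n + 1) → Fin d, Real.exp (birkhoff g (n + 1) (periodize n w))) / ((n : ℝ) + 1))
    Filter.atTop

def zetaVal {d : ℕ} (f : X d → ℝ) (c s : ℝ) (k : X d → ℝ) : ℝ :=
  ∑' n : ℕ, ∑ w : Fin (n + 1) → Fin d,
    Real.exp (c * s * birkhoff f (n + 1) (periodize n w) - ((n : ℝ) + 1) * pressure (fun y => c * f y))
      * (birkhoff k (n + 1) (periodize n w) / ((n : ℝ) + 1))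

def etaVal {d : ℕ} (f : X d → ℝ) (c : ℝ) (N : ℕ) (k : X d → ℝ) : ℝ :=
  ∑ n ∈ Finset.range N, ∑ w : Fin (n + 1) → Fin d,
    Real.exp (c * birkhoff f (n + 1) (periodize n w)) * (birkhoff k (n + 1) (periodize n w) / ((n : ℝ) + 1))

def piVal {d : ℕ} (f : X d → ℝ) (c : ℝ) (N : ℕ) (k : X d → ℝ) : ℝ :=
  ∑ n ∈ Finset.range N, ∑ w : Fin (n + 1) → Fin d,
    Real.exp (c * birkhoff f (n + 1) (periodize n w) - ((n : ℝ) + 1) * pressure (fun y => c * f y))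
      * (birkhoff k (n + 1) (periodize n w) / ((n : ℝ) + 1))

def cylSet {d : ℕ} (m : ℕ) (w : Fin m → Fin d) : Set (X d) :=
  {x : X d | ∀ i : Fin m, x i = w i}

def Itilde {d : ℕ} (θ : ℝ) (f : X d → ℝ) (x : X d) : EReal :=
  ⨆ ε : {e : ℝ // 0 < e},
    sInf {r : EReal | ∃ y : X d, IsPeriodic y ∧ dtheta θ x y ≤ ε.1 ∧ r = ((Ifun f y : ℝ) : EReal)}

def orbitMeasure {d : ℕ} (x : X d) : Measure (X d) :=
  ((minPer x : ℝ≥0∞))⁻¹ • ∑ i ∈ Finset.range (minPer x), Measure.dirac (shift^[i] x)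

section Helpers

variable {d : ℕ}

lemma shift_iterate_apply (x : X d) (k n : ℕ) : (shift^[k] x) n = x (n + k) := by
  induction k generalizing x with
  | zero => rfl
  | succ k ih =>
    rw [Function.iterate_succ_apply, ih]
    show x (n + k + 1) = _
    ring_nf

lemma measurable_shift : Measurable (shift : X d → X d) :=
  measurable_pi_lambda _ fun n => measurable_pi_apply (n + 1)

lemma birkhoff_add (f : X d → ℝ) (a b : ℕ) (x : X d) :
    birkhoff f (a + b) x = birkhoff f a x + birkhoff f b (shift^[a] x) := by
  unfold birkhoff
  rw [Finset.sum_range_add]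
  congr 1
  refine Finset.sum_congr rfl fun i _ => ?_
  rw [← Function.iterate_add_apply, Nat.add_comm a i]

lemma shift_iterate_fixed {x : X d} {p : ℕ} (hp : shift^[p] x = x) (k : ℕ) :
    shift^[k * p] x = x := by
  rw [Nat.mul_comm, Function.iterate_mul]
  exact Function.IsFixedPt.iterate hp k

lemma birkhoff_mul (f : X d → ℝ) {p : ℕ} {x : X d} (hp : shift^[p] x = x) (k : ℕ) :
    birkhoff f (k * p) x = k * birkhoff f p x := by
  induction k with
  | zero => simp [birkhoff]
  | succ k ih =>
    have h : (k + 1) * p = k * p + p := by ring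
    rw [h, birkhoff_add, ih, shift_iterate_fixed hp k]
    push_cast; ring

lemma dtheta_self (θ : ℝ) (x : X d) : dtheta θ x x = 0 := by
  unfold dtheta
  exact dif_pos rfl

lemma dtheta_nonneg {θ : ℝ} (hθ0 : 0 ≤ θ) (x y : X d) : 0 ≤ dtheta θ x y := by
  unfold dtheta
  split
  · exact le_refl _
  · exact pow_nonneg hθ0 _

lemma dtheta_le_one {θ : ℝ} (hθ0 : 0 ≤ θ) (hθ1 : θ ≤ 1) (x y : X d) :
    dtheta θ x y ≤ 1 := by
  unfold dtheta
  split
  · exact zero_le_one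
  · exact pow_le_one₀ hθ0 hθ1

lemma dtheta_le_pow {θ : ℝ} (hθ0 : 0 ≤ θ) (hθ1 : θ ≤ 1) {x y : X d} {N : ℕ}
    (h : ∀ i < N, x i = y i) : dtheta θ x y ≤ θ ^ N := by
  unfold dtheta
  split
  · exact pow_nonneg hθ0 _
  · rename_i hne
    refine pow_le_pow_of_le_one hθ0 hθ1 ?_
    by_contra hc
    push_neg at hc
    exact Nat.find_spec (Function.ne_iff.mp hne) (h _ hc)

lemma agree_of_dtheta_le {θ : ℝ} (hθ0 : 0 < θ) (hθ1 : θ < 1) {x y : X d} {N : ℕ}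
    (h : dtheta θ x y ≤ θ ^ N) : ∀ i < N, x i = y i := by
  intro i hi
  unfold dtheta at h
  split at h
  · rename_i he; rw [he]
  · rename_i hne
    have hfind : N ≤ Nat.find (Function.ne_iff.mp hne) := by
      by_contra hc
      push_neg at hc
      exact absurd h (not_le.mpr (pow_lt_pow_right_of_lt_one₀ hθ0 hθ1 hc))
    have := Nat.find_min (Function.ne_iff.mp hne) (lt_of_lt_of_le hi hfind)
    simpa using this

lemma ne_of_dtheta_pos {θ : ℝ} {x y : X d} (h : 0 < dtheta θ x y) : x ≠ y := by
  intro he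
  unfold dtheta at h
  rw [dif_pos he] at h
  exact lt_irrefl _ h

lemma apply_mod {x : X d} {m : ℕ} (hm : 0 < m) (hx : shift^[m] x = x) (n : ℕ) :
    x n = x (n % m) := by
  conv_lhs => rw [← Nat.mod_add_div' n m]
  rw [show x (n % m + n / m * m) = (shift^[n / m * m] x) (n % m) from
    (shift_iterate_apply x (n / m * m) (n % m)).symm, shift_iterate_fixed hx]

lemma eq_of_close_periodic {x y : X d} {p q : ℕ} (hp : 0 < p) (hq : 0 < q)
    (hx : shift^[p] x = x) (hy : shift^[q] y = y) (h : ∀ i < p * q, x i = y i) : x = y := by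
  funext n
  have hpq : 0 < p * q := Nat.mul_pos hp hq
  have h1 : shift^[p * q] x = x := by rw [Nat.mul_comm]; exact shift_iterate_fixed hx q
  have h2 : shift^[p * q] y = y := shift_iterate_fixed hy p
  rw [apply_mod hpq h1 n, apply_mod hpq h2 n]
  exact h _ (Nat.mod_lt _ hpq)

lemma minPer_pos {y : X d} (hy : IsPeriodic y) : 0 < minPer y := by
  obtain ⟨n, hn, hny⟩ := hy
  exact Function.IsPeriodicPt.minimalPeriod_pos hn hny

lemma shift_minPer (y : X d) : shift^[minPer y] y = y :=
  Function.iterate_minimalPeriod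

lemma sum_range_succ_rotate {M : Type*} [AddCommMonoid M] (g : ℕ → M) (m : ℕ)
    (hg : g m = g 0) :
    ∑ i ∈ Finset.range m, g (i + 1) = ∑ i ∈ Finset.range m, g i := by
  rcases Nat.eq_zero_or_pos m with h | hm
  · simp [h]
  have e1 : ∑ i ∈ Finset.range m, g (i + 1) = ∑ i ∈ Finset.Ico 1 m, g i + g m := by
    rw [← Finset.sum_Ico_succ_top hm, Finset.sum_Ico_eq_sum_range]
    simp only [Nat.add_sub_cancel]
    exact Finset.sum_congr rfl fun i _ => by rw [Nat.add_comm]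
  have e3 : ∑ i ∈ Finset.range m, g i = g 0 + ∑ i ∈ Finset.Ico 1 m, g i := by
    rw [Finset.range_eq_Ico, Finset.sum_eq_sum_Ico_succ_bot hm]
  rw [e1, e3, hg, add_comm]

lemma integrable_dirac' (f : X d → ℝ) (a : X d) :
    MeasureTheory.Integrable f (MeasureTheory.Measure.dirac a) := by
  have h : f =ᵐ[MeasureTheory.Measure.dirac a] fun _ => f a := by
    rw [MeasureTheory.ae_dirac_eq]
    exact Filter.eventually_pure.2 rfl
  exact (MeasureTheory.integrable_const (f a)).congr h.symm

end Helpers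
section Helpers2

open MeasureTheory

variable {d : ℕ}

/-- The orbit-average measure of a point with `shift^[m] z = z` is an invariant
probability measure, and integrates `f` to the Birkhoff average. -/
lemma self_mem_betaSet {z : X d} {m : ℕ} (hm : 0 < m) (hz : shift^[m] z = z) (f : X d → ℝ) :
    ∃ μ : Measure (X d), IsProbabilityMeasure μ ∧ μ.map shift = μ ∧
      (m : ℝ)⁻¹ * birkhoff f m z = ∫ x, f x ∂μ := by
  set μ : Measure (X d) :=
    ((m : ℝ≥0∞))⁻¹ • ∑ i ∈ Finset.range m, Measure.dirac (shift^[i] z) with hμ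
  have hm0 : (m : ℝ≥0∞) ≠ 0 := Nat.cast_ne_zero.mpr hm.ne' 
  have hmtop : (m : ℝ≥0∞) ≠ ⊤ := ENNReal.natCast_ne_top m
  have hmapsum : (∑ i ∈ Finset.range m, Measure.dirac (shift^[i] z)).map shift
      = ∑ i ∈ Finset.range m, (Measure.dirac (shift^[i] z)).map shift := by
    classical
    induction (Finset.range m) using Finset.cons_induction with
    | empty => simp
    | cons a s ha ih => rw [Finset.sum_cons, Finset.sum_cons, Measure.map_add _ _ measurable_shift, ih]
  refine ⟨μ, ?_, ?_, ?_⟩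
  · constructor
    rw [hμ, Measure.smul_apply, Measure.finset_sum_apply]
    simp only [Measure.dirac_apply_of_mem (Set.mem_univ _)]
    rw [Finset.sum_const, Finset.card_range, nsmul_eq_mul, mul_one, smul_eq_mul,
      ENNReal.inv_mul_cancel hm0 hmtop]
  · rw [hμ, Measure.map_smul, hmapsum]
    congr 1
    have h1 : ∀ i, (Measure.dirac (shift^[i] z)).map shift = Measure.dirac (shift^[i+1] z) := by
      intro i
      rw [Measure.map_dirac' measurable_shift, Function.iterate_succ_apply']
    simp only [h1]
    refine sum_range_succ_rotate (fun i => Measure.dirac (shift^[i] z)) m ?_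
    show Measure.dirac (shift^[m] z) = Measure.dirac (shift^[0] z)
    rw [hz]
    rfl
  · rw [hμ, integral_smul_measure,
      integral_finset_sum_measure (fun i _ => integrable_dirac' f _)]
    simp only [integral_dirac]
    rw [ENNReal.toReal_inv, ENNReal.toReal_natCast, smul_eq_mul]
    rfl

end Helpers2
section Helpers3

open MeasureTheory

variable {d : ℕ}

lemma le_beta (hd : 0 < d) {θ C : ℝ} {f : X d → ℝ} (hθ0 : 0 < θ) (hθ1 : θ < 1)
    (hC : 0 ≤ C) (hf : LipWrt θ C f) {r : ℝ}
    (hr : ∃ μ : Measure (X d), IsProbabilityMeasure μ ∧ μ.map shift = μ ∧ r = ∫ x, f x ∂μ) :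
    r ≤ beta f := by
  set z₀ : X d := fun _ => ⟨0, hd⟩ with hz₀
  refine le_csSup ⟨|f z₀| + C, ?_⟩ hr
  rintro s ⟨μ, hμ, -, rfl⟩
  haveI := hμ
  have hb : ∀ᵐ w ∂μ, ‖f w‖ ≤ |f z₀| + C := by
    refine MeasureTheory.ae_of_all _ fun w => ?_
    have h1 := hf w z₀
    have h2 := dtheta_le_one hθ0.le hθ1.le w z₀
    have h3 := dtheta_nonneg hθ0.le w z₀
    have h4 : C * dtheta θ w z₀ ≤ C := by nlinarith
    have h5 := abs_sub_abs_le_abs_sub (f w) (f z₀)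
    rw [Real.norm_eq_abs]
    linarith
  have hB := norm_integral_le_of_norm_le_const hb
  rw [probReal_univ, mul_one, Real.norm_eq_abs] at hB
  exact (le_abs_self _).trans hB

lemma birkhoff_le_beta (hd : 0 < d) {θ C : ℝ} {f : X d → ℝ} (hθ0 : 0 < θ) (hθ1 : θ < 1)
    (hC : 0 ≤ C) (hf : LipWrt θ C f) {z : X d} {m : ℕ} (hm : 0 < m) (hz : shift^[m] z = z) :
    birkhoff f m z ≤ (m : ℝ) * beta f := by
  obtain ⟨μ, h1, h2, h3⟩ := self_mem_betaSet hm hz f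
  have hmem : (m : ℝ)⁻¹ * birkhoff f m z ≤ beta f :=
    le_beta hd hθ0 hθ1 hC hf ⟨μ, h1, h2, h3⟩
  have hm' : (0 : ℝ) < m := by exact_mod_cast hm
  calc birkhoff f m z = m * ((m : ℝ)⁻¹ * birkhoff f m z) := by field_simp
    _ ≤ m * beta f := mul_le_mul_of_nonneg_left hmem hm'.le

lemma geom_partial_le {θ : ℝ} (hθ0 : 0 ≤ θ) (hθ1 : θ < 1) (m : ℕ) :
    ∑ j ∈ Finset.range m, θ ^ j ≤ 1 / (1 - θ) := by
  have h1 : 0 < 1 - θ := by linarith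
  induction m with
  | zero => simpa using (one_div_pos.mpr h1).le
  | succ n ih =>
    rw [geom_sum_succ]
    have h2 := mul_le_mul_of_nonneg_left ih hθ0
    have key : θ * (1 / (1 - θ)) + 1 = 1 / (1 - θ) := by field_simp; ring
    linarith

lemma birkhoff_close {θ C : ℝ} (hθ0 : 0 < θ) (hθ1 : θ < 1) (hC : 0 ≤ C) {f : X d → ℝ}
    (hf : LipWrt θ C f) {x y : X d} {N m : ℕ} (hagree : ∀ i < N, x i = y i) (hm : m ≤ N) :
    |birkhoff f m x - birkhoff f m y| ≤ C * (1 / (1 - θ)) := by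
  unfold birkhoff
  rw [← Finset.sum_sub_distrib]
  refine (Finset.abs_sum_le_sum_abs _ _).trans ?_
  have step : ∀ i ∈ Finset.range m,
      |f (shift^[i] x) - f (shift^[i] y)| ≤ C * θ ^ (m - 1 - i) := by
    intro i hi
    rw [Finset.mem_range] at hi
    have hθd : dtheta θ (shift^[i] x) (shift^[i] y) ≤ θ ^ (N - i) := by
      refine dtheta_le_pow hθ0.le hθ1.le fun j hj => ?_
      rw [shift_iterate_apply, shift_iterate_apply]
      exact hagree (j + i) (by omega)
    calc |f (shift^[i] x) - f (shift^[i] y)| ≤ C * dtheta θ (shift^[i] x) (shift^[i] y) :=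
          hf _ _
      _ ≤ C * θ ^ (N - i) := mul_le_mul_of_nonneg_left hθd hC
      _ ≤ C * θ ^ (m - 1 - i) :=
          mul_le_mul_of_nonneg_left (pow_le_pow_of_le_one hθ0.le hθ1.le (by omega)) hC
  calc ∑ i ∈ Finset.range m, |f (shift^[i] x) - f (shift^[i] y)|
      ≤ ∑ i ∈ Finset.range m, C * θ ^ (m - 1 - i) := Finset.sum_le_sum step
    _ = C * ∑ i ∈ Finset.range m, θ ^ (m - 1 - i) := by rw [Finset.mul_sum]
    _ = C * ∑ j ∈ Finset.range m, θ ^ j := by rw [Finset.sum_range_reflect]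
    _ ≤ C * (1 / (1 - θ)) :=
        mul_le_mul_of_nonneg_left (geom_partial_le hθ0.le hθ1 m) hC

lemma birkhoff_global_le (hd : 0 < d) {θ C : ℝ} {f : X d → ℝ} (hθ0 : 0 < θ) (hθ1 : θ < 1)
    (hC : 0 ≤ C) (hf : LipWrt θ C f) (z : X d) (m : ℕ) :
    birkhoff f m z ≤ (m : ℝ) * beta f + C * (1 / (1 - θ)) := by
  have h1 : 0 < 1 - θ := by linarith
  rcases Nat.eq_zero_or_pos m with rfl | hm
  · simp [birkhoff]
    positivity
  obtain ⟨n, rfl⟩ := Nat.exists_eq_succ_of_ne_zero hm.ne'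
  set w : Fin (n + 1) → Fin d := fun i => z i.val with hw
  have hper : shift^[n + 1] (periodize n w) = periodize n w := by
    funext k
    rw [shift_iterate_apply]
    show z ((k + (n + 1)) % (n + 1)) = z (k % (n + 1))
    rw [Nat.add_mod_right]
  have hagree : ∀ i < n + 1, z i = periodize n w i := by
    intro i hi
    show z i = z (i % (n + 1))
    rw [Nat.mod_eq_of_lt hi]
  have hclose := birkhoff_close hθ0 hθ1 hC hf hagree (le_refl (n + 1))
  have h2 : birkhoff f (n + 1) z - birkhoff f (n + 1) (periodize n w)
      ≤ C * (1 / (1 - θ)) := (le_abs_self _).trans hclose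
  have h3 := birkhoff_le_beta hd hθ0 hθ1 hC hf (Nat.succ_pos n) hper
  push_cast at h3 ⊢
  linarith

lemma Ifun_nonneg (hd : 0 < d) {θ C : ℝ} {f : X d → ℝ} (hθ0 : 0 < θ) (hθ1 : θ < 1)
    (hC : 0 ≤ C) (hf : LipWrt θ C f) {y : X d} (hy : IsPeriodic y) : 0 ≤ Ifun f y := by
  have := birkhoff_le_beta hd hθ0 hθ1 hC hf (minPer_pos hy) (shift_minPer y)
  unfold Ifun
  linarith

end Helpers3
section MainLemma

variable {d : ℕ}

lemma main_estimate (hd : 0 < d) {θ C : ℝ} (hθ0 : 0 < θ) (hθ1 : θ < 1) (hC : 0 ≤ C)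
    {f : X d → ℝ} (hf : LipWrt θ C f) {x : X d} (hx : IsPeriodic x) (hIx : 0 < Ifun f x)
    (R : ℝ) :
    ∃ N : ℕ, ∀ y : X d, IsPeriodic y → y ≠ x → (∀ i < N, x i = y i) → R ≤ Ifun f y := by
  set K : ℝ := C * (1 / (1 - θ)) with hK
  have h1θ : (0 : ℝ) < 1 - θ := by linarith
  have hK0 : 0 ≤ K := by positivity
  set p := minPer x with hpdef
  have hp : 0 < p := minPer_pos hx
  have hpx : shift^[p] x = x := shift_minPer x
  set M : ℕ := max 1 ⌈(R + 2 * K) / Ifun f x⌉₊ with hMdef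
  refine ⟨p * p * M, ?_⟩
  intro y hy hyx hagree
  set N := p * p * M with hNdef
  set n := minPer y with hndef
  have hn : 0 < n := minPer_pos hy
  have hny : shift^[n] y = y := shift_minPer y
  -- y ≠ x forces the period of y to be large
  have hpn : N ≤ p * n := by
    by_contra hc
    push_neg at hc
    refine hyx (eq_of_close_periodic hn hp hny hpx fun i hi => (hagree i ?_).symm)
    have hcomm := Nat.mul_comm n p
    omega
  have hnN : N / p ≤ n := by
    have h : N / p ≤ p * n / p := Nat.div_le_div_right hpn
    rwa [Nat.mul_div_cancel_left n hp] at h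
  set k := min N n / p with hkdef
  have hkM : M ≤ k := by
    have h1 : N / p ≤ min N n := le_min (Nat.div_le_self N p) hnN
    have h2 : N / p / p ≤ min N n / p := Nat.div_le_div_right h1
    rw [Nat.div_div_eq_div_mul] at h2
    have h3 : N / (p * p) = M := by
      rw [hNdef]
      exact Nat.mul_div_cancel_left M (Nat.mul_pos hp hp)
    omega
  have hkpn : k * p ≤ n := (Nat.div_mul_le_self _ _).trans (min_le_right _ _)
  have hkpN : k * p ≤ N := (Nat.div_mul_le_self _ _).trans (min_le_left _ _)
  -- the Birkhoff sum estimate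
  have e1 : birkhoff f n y = birkhoff f (k * p) y + birkhoff f (n - k * p) (shift^[k * p] y) := by
    rw [← birkhoff_add]
    congr 1
    omega
  have e2 : birkhoff f (k * p) y ≤ birkhoff f (k * p) x + K := by
    have h := birkhoff_close hθ0 hθ1 hC hf hagree hkpN
    have h' := le_abs_self (birkhoff f (k * p) y - birkhoff f (k * p) x)
    rw [abs_sub_comm] at h
    linarith
  have e3 : birkhoff f (k * p) x = k * ((p : ℝ) * beta f - Ifun f x) := by
    rw [birkhoff_mul f hpx k]
    have h : birkhoff f p x = (p : ℝ) * beta f - Ifun f x := by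
      unfold Ifun
      rw [← hpdef]
      ring
    rw [h]
  have e4 : birkhoff f (n - k * p) (shift^[k * p] y)
      ≤ ((n - k * p : ℕ) : ℝ) * beta f + K :=
    birkhoff_global_le hd hθ0 hθ1 hC hf _ _
  have hcast : ((n - k * p : ℕ) : ℝ) = (n : ℝ) - (k : ℝ) * (p : ℝ) := by
    push_cast [Nat.cast_sub hkpn]
    ring
  have hIy : (k : ℝ) * Ifun f x - 2 * K ≤ Ifun f y := by
    have hIynd : Ifun f y = (n : ℝ) * beta f - birkhoff f n y := by
      unfold Ifun
      rw [← hndef]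
    rw [hcast] at e4
    rw [hIynd, e1]
    nlinarith [e2, e3, e4]
  -- conclude
  have hMle : R + 2 * K ≤ (M : ℝ) * Ifun f x := by
    have h1 : (R + 2 * K) / Ifun f x ≤ (⌈(R + 2 * K) / Ifun f x⌉₊ : ℝ) := Nat.le_ceil _
    have h2 : ((⌈(R + 2 * K) / Ifun f x⌉₊ : ℕ) : ℝ) ≤ (M : ℝ) :=
      Nat.cast_le.mpr (le_max_right _ _)
    have h3 := (div_le_iff₀ hIx).mp (h1.trans h2)
    linarith
  have hkM' : (M : ℝ) * Ifun f x ≤ (k : ℝ) * Ifun f x :=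
    mul_le_mul_of_nonneg_right (Nat.cast_le.mpr hkM) hIx.le
  linarith

end MainLemma
theorem stmt8 (d : ℕ) (hd : 0 < d) (θ C : ℝ) (hθ0 : 0 < θ) (hθ1 : θ < 1)
    (f : X d → ℝ) (hf : LipWrt θ C f) (x : X d) (hx : IsPeriodic x) (hIx : Ifun f x ≠ 0) :
    Tendsto (fun ε : ℝ =>
        sInf {r : EReal | ∃ y : X d, IsPeriodic y ∧ 0 < dtheta θ x y ∧ dtheta θ x y ≤ ε ∧
          r = ((Ifun f y : ℝ) : EReal)})
      (𝓝[>] (0 : ℝ)) (𝓝 (⊤ : EReal)) ∧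
    (∀ z : X d, IsPeriodic z → Itilde θ f z = ((Ifun f z : ℝ) : EReal)) := by
  set C' : ℝ := max C 0 with hC'
  have hC0 : 0 ≤ C' := le_max_right _ _
  have hf' : LipWrt θ C' f := fun a b =>
    (hf a b).trans (mul_le_mul_of_nonneg_right (le_max_left _ _) (dtheta_nonneg hθ0.le a b))
  have hIx0 : 0 < Ifun f x :=
    lt_of_le_of_ne (Ifun_nonneg hd hθ0 hθ1 hC0 hf' hx) (Ne.symm hIx)
  constructor
  · rw [EReal.tendsto_nhds_top_iff_real]
    intro R
    obtain ⟨N, hN⟩ := main_estimate hd hθ0 hθ1 hC0 hf' hx hIx0 (R + 1)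
    have hδ : (0 : ℝ) < θ ^ N := pow_pos hθ0 N
    filter_upwards [Ioc_mem_nhdsGT hδ] with ε hε
    have hle : ((R + 1 : ℝ) : EReal) ≤ sInf {r : EReal | ∃ y : X d, IsPeriodic y ∧
        0 < dtheta θ x y ∧ dtheta θ x y ≤ ε ∧ r = ((Ifun f y : ℝ) : EReal)} := by
      apply le_sInf
      rintro r ⟨y, hyper, hdpos, hdle, rfl⟩
      have hagree := agree_of_dtheta_le hθ0 hθ1 (hdle.trans hε.2)
      exact EReal.coe_le_coe_iff.mpr (hN y hyper (ne_of_dtheta_pos hdpos).symm hagree)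
    refine lt_of_lt_of_le ?_ hle
    exact EReal.coe_lt_coe_iff.mpr (by linarith)
  · intro z hz
    refine le_antisymm ?_ ?_
    · refine iSup_le fun ε => sInf_le ⟨z, hz, ?_, rfl⟩
      rw [dtheta_self]
      exact ε.2.le
    · rcases eq_or_lt_of_le (Ifun_nonneg hd hθ0 hθ1 hC0 hf' hz) with h0 | hpos
      · refine le_trans ?_ (le_iSup _ (⟨1, one_pos⟩ : {e : ℝ // 0 < e}))
        apply le_sInf
        rintro r ⟨y, hy, -, rfl⟩
        rw [← h0]
        exact EReal.coe_le_coe_iff.mpr (Ifun_nonneg hd hθ0 hθ1 hC0 hf' hy)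
      · obtain ⟨N, hN⟩ := main_estimate hd hθ0 hθ1 hC0 hf' hz hpos (Ifun f z)
        refine le_trans ?_ (le_iSup _ (⟨θ ^ N, pow_pos hθ0 N⟩ : {e : ℝ // 0 < e}))
        apply le_sInf
        rintro r ⟨y, hy, hdle, rfl⟩
        rcases eq_or_ne y z with rfl | hne
        · exact le_refl _
        · exact EReal.coe_le_coe_iff.mpr (hN y hy hne (agree_of_dtheta_le hθ0 hθ1 hdle))
end
end

section
/- Let f be Lipschitz and x a periodic point with minimal period n_x. The following are equivalent: (i) I(x) = 0; (ii) the invariant probability μ_x equidistributed on the orbit {x, σx, ..., σ^{n_x−1}x} is f-maximizing; (iii) x belongs to the support of some f-maximizing invariant probability. -/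
open MeasureTheory Filter Real Topology
open scoped ENNReal

noncomputable section

namespace Stmt10Aux

variable {d : ℕ} {θ C : ℝ}

lemma shift_iter_apply (i : ℕ) (x : X d) (j : ℕ) : (shift^[i] x) j = x (j + i) := by
  induction i generalizing x with
  | zero => rfl
  | succ i ih =>
      rw [Function.iterate_succ_apply, ih (shift x)]
      rfl

lemma shift_measurable : Measurable (shift (d := d)) :=
  measurable_pi_iff.mpr fun n => measurable_pi_apply (n + 1)

lemma shift_continuous : Continuous (shift (d := d)) :=
  continuous_pi fun n => continuous_apply (n + 1)

lemma dtheta_nonneg (hθ0 : 0 < θ) (x y : X d) : 0 ≤ dtheta θ x y := by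
  unfold dtheta
  split
  · exact le_refl 0
  · positivity

lemma dtheta_le_pow (hθ0 : 0 < θ) (hθ1 : θ < 1) {x y : X d} {k : ℕ}
    (h : ∀ i < k, x i = y i) : dtheta θ x y ≤ θ ^ k := by
  unfold dtheta
  split
  · positivity
  · exact pow_le_pow_of_le_one hθ0.le hθ1.le
      ((Nat.le_find_iff _ _).mpr fun m hm => not_not_intro (h m hm))

lemma lip_agree {f : X d → ℝ} (hθ0 : 0 < θ) (hθ1 : θ < 1) (hf : LipWrt θ C f)
    {x y : X d} {k : ℕ} (h : ∀ i < k, x i = y i) : |f x - f y| ≤ |C| * θ ^ k := by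
  calc |f x - f y| ≤ C * dtheta θ x y := hf x y
    _ ≤ |C| * dtheta θ x y := mul_le_mul_of_nonneg_right (le_abs_self C) (dtheta_nonneg hθ0 _ _)
    _ ≤ |C| * θ ^ k := mul_le_mul_of_nonneg_left (dtheta_le_pow hθ0 hθ1 h) (abs_nonneg C)

lemma lip_bound {f : X d → ℝ} (hθ0 : 0 < θ) (hθ1 : θ < 1) (hf : LipWrt θ C f)
    (x0 y : X d) : |f y| ≤ |f x0| + |C| := by
  have h := lip_agree (k := 0) hθ0 hθ1 hf (x := y) (y := x0) (by omega)
  rw [pow_zero, mul_one] at h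
  have h2 : |f y| - |f x0| ≤ |f y - f x0| := abs_sub_abs_le_abs_sub _ _
  linarith

lemma lip_continuous {f : X d → ℝ} (hθ0 : 0 < θ) (hθ1 : θ < 1) (hf : LipWrt θ C f) :
    Continuous f := by
  refine continuous_iff_continuousAt.mpr fun x => ?_
  rw [ContinuousAt, Metric.tendsto_nhds]
  intro ε hε
  obtain ⟨k, hk⟩ : ∃ k, |C| * θ ^ k < ε := by
    have h1 : Tendsto (fun k : ℕ => |C| * θ ^ k) atTop (𝓝 (|C| * 0)) :=
      (tendsto_pow_atTop_nhds_zero_of_lt_one hθ0.le hθ1).const_mul _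
    rw [mul_zero] at h1
    exact (h1.eventually (gt_mem_nhds hε)).exists
  have hV : IsOpen {y : X d | ∀ i < k, y i = x i} := by
    have h2 : {y : X d | ∀ i < k, y i = x i} = ⋂ i ∈ Finset.range k, {y : X d | y i = x i} := by
      ext y; simp
    rw [h2]
    refine isOpen_biInter_finset fun i _ => ?_
    have h3 : {y : X d | y i = x i} = (fun y : X d => y i) ⁻¹' {x i} := rfl
    rw [h3]
    exact IsOpen.preimage (continuous_apply i) (isOpen_discrete {x i})
  filter_upwards [hV.mem_nhds (fun i _ => rfl)] with y hy
  calc dist (f y) (f x) = |f y - f x| := Real.dist_eq _ _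
    _ ≤ |C| * θ ^ k := lip_agree hθ0 hθ1 hf hy
    _ < ε := hk

lemma geom_tail_le (hθ0 : 0 < θ) (hθ1 : θ < 1) (m : ℕ) :
    ∑ i ∈ Finset.range m, θ ^ (m - i) ≤ θ / (1 - θ) := by
  have hpos : (0:ℝ) < 1 - θ := by linarith
  have h1 : ∑ i ∈ Finset.range m, θ ^ (m - i) = θ * ∑ i ∈ Finset.range m, θ ^ i := by
    rw [← Finset.sum_range_reflect, Finset.mul_sum]
    refine Finset.sum_congr rfl fun i hi => ?_
    rw [Finset.mem_range] at hi
    rw [← pow_succ']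
    congr 1
    omega
  rw [h1, div_eq_mul_inv]
  have h3 : ∑ i ∈ Finset.range m, θ ^ i ≤ (1 - θ)⁻¹ := by
    rw [geom_sum_eq hθ1.ne m]
    have he : (θ ^ m - 1) / (θ - 1) = (1 - θ ^ m) / (1 - θ) := by
      rw [← neg_div_neg_eq]
      ring_nf
    rw [he, div_eq_mul_inv]
    have h4 : 1 - θ ^ m ≤ 1 := by
      have : (0:ℝ) ≤ θ ^ m := by positivity
      linarith
    calc (1 - θ ^ m) * (1 - θ)⁻¹ ≤ 1 * (1 - θ)⁻¹ :=
          mul_le_mul_of_nonneg_right h4 (by positivity)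
      _ = (1 - θ)⁻¹ := one_mul _
  exact mul_le_mul_of_nonneg_left h3 hθ0.le

end Stmt10Aux

namespace Stmt10Aux

variable {d : ℕ} {θ C : ℝ}

def pm (m : ℕ) (z : X d) : Measure (X d) :=
  ((m : ℝ≥0∞))⁻¹ • ∑ i ∈ Finset.range m, Measure.dirac (shift^[i] z)

lemma orbitMeasure_eq (x : X d) : orbitMeasure x = pm (minPer x) x := rfl

lemma pm_prob {m : ℕ} (hm : 0 < m) (z : X d) : IsProbabilityMeasure (pm m z) := by
  constructor
  rw [pm, Measure.smul_apply, Measure.finset_sum_apply]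
  simp only [measure_univ, Finset.sum_const, Finset.card_range, nsmul_eq_mul, mul_one,
    smul_eq_mul]
  exact ENNReal.inv_mul_cancel (by exact_mod_cast hm.ne') (ENNReal.natCast_ne_top m)

lemma map_finset_sum {ι : Type*} (s : Finset ι) (μ : ι → Measure (X d)) {g : X d → X d}
    (hg : Measurable g) : (∑ i ∈ s, μ i).map g = ∑ i ∈ s, (μ i).map g := by
  classical
  induction s using Finset.induction_on with
  | empty => simp [Measure.map_zero]
  | insert _ _ hnot ih =>
      rw [Finset.sum_insert hnot, Finset.sum_insert hnot, Measure.map_add _ _ hg, ih]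

lemma cyclic_dirac_sum {m : ℕ} (hm : 0 < m) {z : X d} (hz : shift^[m] z = z) :
    ∑ i ∈ Finset.range m, Measure.dirac (shift^[i + 1] z)
      = ∑ i ∈ Finset.range m, Measure.dirac (shift^[i] z) := by
  have hstep : ∀ i ∈ Finset.range m,
      Measure.dirac (shift^[i + 1] z) = Measure.dirac (shift^[(i + 1) % m] z) := by
    intro i hi
    rw [Finset.mem_range] at hi
    rcases eq_or_lt_of_le (Nat.succ_le_of_lt hi) with h | h
    · rw [show i + 1 = m from h, Nat.mod_self, hz]
      rfl
    · rw [Nat.mod_eq_of_lt h]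
  rw [Finset.sum_congr rfl hstep]
  refine Finset.sum_nbij' (fun i => (i + 1) % m) (fun j => (j + (m - 1)) % m)
    (fun a ha => ?_) (fun b hb => ?_) (fun a ha => ?_) (fun b hb => ?_) (fun a ha => rfl)
  · exact Finset.mem_range.mpr (Nat.mod_lt _ hm)
  · exact Finset.mem_range.mpr (Nat.mod_lt _ hm)
  · rw [Finset.mem_range] at ha
    show ((a + 1) % m + (m - 1)) % m = a
    rcases Nat.lt_or_ge (a + 1) m with h | h
    · rw [Nat.mod_eq_of_lt h, show a + 1 + (m - 1) = a + m by omega, Nat.add_mod_right,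
        Nat.mod_eq_of_lt ha]
    · rw [show a + 1 = m by omega, Nat.mod_self, Nat.zero_add,
        Nat.mod_eq_of_lt (show m - 1 < m by omega)]
      omega
  · rw [Finset.mem_range] at hb
    show ((b + (m - 1)) % m + 1) % m = b
    rcases Nat.eq_zero_or_pos b with h | h
    · subst h
      rw [Nat.zero_add, Nat.mod_eq_of_lt (show m - 1 < m by omega),
        show m - 1 + 1 = m by omega, Nat.mod_self]
    · rw [show b + (m - 1) = (b - 1) + m by omega, Nat.add_mod_right,
        Nat.mod_eq_of_lt (show b - 1 < m by omega), show b - 1 + 1 = b by omega,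
        Nat.mod_eq_of_lt hb]

lemma pm_invariant {m : ℕ} (hm : 0 < m) {z : X d} (hz : shift^[m] z = z) :
    (pm m z).map shift = pm m z := by
  rw [pm, Measure.map_smul, map_finset_sum _ _ shift_measurable]
  congr 1
  have h1 : ∀ i ∈ Finset.range m,
      (Measure.dirac (shift^[i] z)).map shift = Measure.dirac (shift^[i + 1] z) := by
    intro i _
    rw [Measure.map_dirac' shift_measurable, ← Function.iterate_succ_apply' shift i z]
  rw [Finset.sum_congr rfl h1, cyclic_dirac_sum hm hz]

lemma integrable_dirac {f : X d → ℝ} (hfc : Continuous f) (a : X d) :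
    Integrable f (Measure.dirac a) := by
  refine ⟨hfc.aestronglyMeasurable, ?_⟩
  rw [HasFiniteIntegral]
  rw [lintegral_dirac]
  exact ENNReal.coe_lt_top

lemma pm_integral {m : ℕ} (hm : 0 < m) (z : X d) {f : X d → ℝ} (hfc : Continuous f) :
    ∫ y, f y ∂(pm m z) = birkhoff f m z / m := by
  rw [pm, integral_smul_measure,
    integral_finset_sum_measure (fun i _ => integrable_dirac hfc _)]
  have h1 : ∀ i ∈ Finset.range m, ∫ y, f y ∂(Measure.dirac (shift^[i] z)) = f (shift^[i] z) :=
    fun i _ => integral_dirac f _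
  rw [Finset.sum_congr rfl h1]
  rw [ENNReal.toReal_inv, ENNReal.toReal_natCast]
  rw [birkhoff, div_eq_inv_mul, smul_eq_mul]

def SSet (d : ℕ) (f : X d → ℝ) : Set ℝ :=
  {r : ℝ | ∃ μ : Measure (X d), IsProbabilityMeasure μ ∧ μ.map shift = μ ∧ r = ∫ x, f x ∂μ}

lemma beta_eq (f : X d → ℝ) : beta f = sSup (SSet d f) := rfl

lemma bddAbove_SSet (hd : 0 < d) (hθ0 : 0 < θ) (hθ1 : θ < 1) {f : X d → ℝ}
    (hf : LipWrt θ C f) : BddAbove (SSet d f) := by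
  set x0 : X d := fun _ => ⟨0, hd⟩ with hx0
  refine ⟨|f x0| + |C|, fun r hr => ?_⟩
  obtain ⟨μ, hμp, hμi, hr⟩ := hr
  haveI := hμp
  have h1 : ‖∫ x, f x ∂μ‖ ≤ (|f x0| + |C|) * (μ Set.univ).toReal :=
    norm_integral_le_of_norm_le_const (ae_of_all μ fun y => by
      rw [Real.norm_eq_abs]; exact lip_bound hθ0 hθ1 hf x0 y)
  rw [measure_univ, ENNReal.toReal_one, mul_one] at h1
  rw [hr]
  calc ∫ x, f x ∂μ ≤ ‖∫ x, f x ∂μ‖ := le_abs_self _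
    _ ≤ |f x0| + |C| := h1

lemma birkhoff_le_beta (hd : 0 < d) (hθ0 : 0 < θ) (hθ1 : θ < 1) {f : X d → ℝ}
    (hf : LipWrt θ C f) {m : ℕ} (hm : 0 < m) {z : X d} (hz : shift^[m] z = z) :
    birkhoff f m z ≤ m * beta f := by
  have hmem : birkhoff f m z / m ∈ SSet d f :=
    ⟨pm m z, pm_prob hm z, pm_invariant hm hz, (pm_integral hm z (lip_continuous hθ0 hθ1 hf)).symm⟩
  have h1 : birkhoff f m z / m ≤ beta f := le_csSup (bddAbove_SSet hd hθ0 hθ1 hf) hmem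
  have hm' : (0:ℝ) < m := by exact_mod_cast hm
  calc birkhoff f m z = (birkhoff f m z / m) * m := by field_simp
    _ ≤ beta f * m := mul_le_mul_of_nonneg_right h1 hm'.le
    _ = m * beta f := mul_comm _ _

end Stmt10Aux

namespace Stmt10Aux

variable {d : ℕ} {θ C : ℝ}

def cw (m : ℕ) (w : Fin m → Fin d) (y : X d) : X d :=
  fun i => if h : i < m then w ⟨i, h⟩ else y (i - m)

lemma cw_lt {m : ℕ} (w : Fin m → Fin d) (y : X d) {i : ℕ} (h : i < m) :
    cw m w y i = w ⟨i, h⟩ := dif_pos h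

lemma cw_ge {m : ℕ} (w : Fin m → Fin d) (y : X d) {i : ℕ} (h : m ≤ i) :
    cw m w y i = y (i - m) := dif_neg (by omega)

lemma shift_iter_cw {m : ℕ} (w : Fin m → Fin d) (y : X d) :
    shift^[m] (cw m w y) = y := by
  funext j
  rw [shift_iter_apply, cw_ge w y (by omega)]
  congr 1
  omega

/-- the index type for the sup defining the sub-action -/
def Wd (d : ℕ) : Type := Σ n : ℕ, (Fin (n + 1) → Fin d)

lemma wd_nonempty (hd : 0 < d) : Nonempty (Wd d) := ⟨⟨0, fun _ => ⟨0, hd⟩⟩⟩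

def phi (f : X d → ℝ) (p : Wd d) (y : X d) : ℝ :=
  birkhoff f (p.1 + 1) (cw (p.1 + 1) p.2 y) - (p.1 + 1) * beta f

def uu (f : X d → ℝ) (y : X d) : ℝ := ⨆ p : Wd d, phi f p y

lemma birkhoff_diff (hθ0 : 0 < θ) (hθ1 : θ < 1) {f : X d → ℝ} (hf : LipWrt θ C f)
    (m k : ℕ) {z z' : X d} (h : ∀ j < m + k, z j = z' j) :
    |birkhoff f m z - birkhoff f m z'| ≤ (|C| * (θ / (1 - θ))) * θ ^ k := by
  rw [birkhoff, birkhoff, ← Finset.sum_sub_distrib]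
  calc |∑ i ∈ Finset.range m, (f (shift^[i] z) - f (shift^[i] z'))|
      ≤ ∑ i ∈ Finset.range m, |f (shift^[i] z) - f (shift^[i] z')| :=
        Finset.abs_sum_le_sum_abs _ _
    _ ≤ ∑ i ∈ Finset.range m, |C| * θ ^ ((m - i) + k) := by
        refine Finset.sum_le_sum fun i hi => ?_
        rw [Finset.mem_range] at hi
        refine lip_agree hθ0 hθ1 hf fun j hj => ?_
        rw [shift_iter_apply, shift_iter_apply]
        exact h (j + i) (by omega)
    _ = (|C| * θ ^ k) * ∑ i ∈ Finset.range m, θ ^ (m - i) := by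
        rw [Finset.mul_sum]
        refine Finset.sum_congr rfl fun i _ => ?_
        rw [pow_add]
        ring
    _ ≤ (|C| * θ ^ k) * (θ / (1 - θ)) := by
        refine mul_le_mul_of_nonneg_left (geom_tail_le hθ0 hθ1 m) ?_
        positivity
    _ = (|C| * (θ / (1 - θ))) * θ ^ k := by ring

lemma phi_le (hd : 0 < d) (hθ0 : 0 < θ) (hθ1 : θ < 1) {f : X d → ℝ} (hf : LipWrt θ C f)
    (p : Wd d) (y : X d) : phi f p y ≤ |C| * (θ / (1 - θ)) := by
  set m := p.1 + 1 with hm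
  set z := cw m p.2 y with hzdef
  set q := periodize p.1 p.2 with hq
  have hqper : shift^[m] q = q := by
    funext j
    rw [shift_iter_apply]
    show p.2 ⟨(j + m) % m, _⟩ = p.2 ⟨j % m, _⟩
    exact congrArg p.2 (Fin.ext (Nat.add_mod_right j m))
  have hagree : ∀ j < m + 0, z j = q j := by
    intro j hj
    rw [hzdef, cw_lt p.2 y (by omega)]
    show p.2 ⟨j, by omega⟩ = p.2 ⟨j % m, _⟩
    exact congrArg p.2 (Fin.ext (Nat.mod_eq_of_lt (show j < m by omega)).symm)
  have h1 := birkhoff_diff hθ0 hθ1 hf m 0 hagree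
  rw [pow_zero, mul_one] at h1
  have h2 : birkhoff f m q ≤ m * beta f :=
    birkhoff_le_beta hd hθ0 hθ1 hf (by omega) hqper
  have h3 : birkhoff f m z - birkhoff f m q ≤ |C| * (θ / (1 - θ)) := (abs_le.mp h1).2
  rw [phi]
  push_cast
  have hmc : ((p.1 : ℝ) + 1) = (m : ℝ) := by push_cast [hm]; ring
  rw [hmc]
  linarith

lemma bdd_phi (hd : 0 < d) (hθ0 : 0 < θ) (hθ1 : θ < 1) {f : X d → ℝ} (hf : LipWrt θ C f)
    (y : X d) : BddAbove (Set.range fun p : Wd d => phi f p y) :=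
  ⟨|C| * (θ / (1 - θ)), Set.forall_mem_range.mpr fun p => phi_le hd hθ0 hθ1 hf p y⟩

lemma le_uu (hd : 0 < d) (hθ0 : 0 < θ) (hθ1 : θ < 1) {f : X d → ℝ} (hf : LipWrt θ C f)
    (p : Wd d) (y : X d) : phi f p y ≤ uu f y :=
  le_ciSup (bdd_phi hd hθ0 hθ1 hf y) p

lemma uu_le (hd : 0 < d) (hθ0 : 0 < θ) (hθ1 : θ < 1) {f : X d → ℝ} (hf : LipWrt θ C f)
    (y : X d) : uu f y ≤ |C| * (θ / (1 - θ)) := by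
  haveI := wd_nonempty (d := d) hd
  exact ciSup_le fun p => phi_le hd hθ0 hθ1 hf p y

lemma phi_diff (hθ0 : 0 < θ) (hθ1 : θ < 1) {f : X d → ℝ} (hf : LipWrt θ C f)
    (p : Wd d) {y y' : X d} {k : ℕ} (h : ∀ i < k, y i = y' i) :
    |phi f p y - phi f p y'| ≤ (|C| * (θ / (1 - θ))) * θ ^ k := by
  set m := p.1 + 1 with hm
  have hagree : ∀ j < m + k, cw m p.2 y j = cw m p.2 y' j := by
    intro j hj
    rcases Nat.lt_or_ge j m with hc | hc
    · rw [cw_lt p.2 y hc, cw_lt p.2 y' hc]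
    · rw [cw_ge p.2 y hc, cw_ge p.2 y' hc]
      exact h (j - m) (by omega)
  have h1 := birkhoff_diff hθ0 hθ1 hf m k hagree
  have h2 : phi f p y - phi f p y' = birkhoff f m (cw m p.2 y) - birkhoff f m (cw m p.2 y') := by
    rw [phi, phi]
    ring
  rw [h2]
  exact h1

lemma uu_lip (hd : 0 < d) (hθ0 : 0 < θ) (hθ1 : θ < 1) {f : X d → ℝ} (hf : LipWrt θ C f) :
    LipWrt θ (|C| * (θ / (1 - θ))) (uu f) := by
  haveI := wd_nonempty (d := d) hd
  intro y y'
  by_cases hyy : y = y'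
  · subst hyy
    have : dtheta θ y y = 0 := dif_pos rfl
    rw [this, sub_self, abs_zero, mul_zero]
  · have hd1 : dtheta θ y y' = θ ^ Nat.find (Function.ne_iff.mp hyy) := dif_neg hyy
    set k := Nat.find (Function.ne_iff.mp hyy) with hk
    have hagree : ∀ i < k, y i = y' i := fun i hi =>
      of_not_not (Nat.find_min (Function.ne_iff.mp hyy) hi)
    rw [hd1]
    rw [abs_sub_le_iff]
    constructor
    · rw [sub_le_iff_le_add]
      refine ciSup_le fun p => ?_
      have h1 := (abs_le.mp (phi_diff hθ0 hθ1 hf p hagree)).2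
      have h2 := le_uu hd hθ0 hθ1 hf p y'
      linarith
    · rw [sub_le_iff_le_add]
      refine ciSup_le fun p => ?_
      have h1 := (abs_le.mp (phi_diff hθ0 hθ1 hf p hagree)).1
      have h2 := le_uu hd hθ0 hθ1 hf p y
      linarith

lemma uu_bound (hd : 0 < d) (hθ0 : 0 < θ) (hθ1 : θ < 1) {f : X d → ℝ} (hf : LipWrt θ C f)
    (x0 y : X d) :
    |uu f y| ≤ |C| * (θ / (1 - θ)) + (|f x0| + |C|) + |beta f| := by
  have hK : 0 ≤ |C| * (θ / (1 - θ)) := by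
    have : (0:ℝ) < 1 - θ := by linarith
    positivity
  have hub := uu_le hd hθ0 hθ1 hf y
  have hlb : f (cw 1 (fun _ => ⟨0, hd⟩) y) - beta f ≤ uu f y := by
    have h := le_uu hd hθ0 hθ1 hf ⟨0, fun _ => ⟨0, hd⟩⟩ y
    unfold phi at h
    simpa [birkhoff] using h
  have hfb := lip_bound hθ0 hθ1 hf x0 (cw 1 (fun _ => ⟨0, hd⟩) y)
  rw [abs_le]
  constructor
  · have h1 : -(|f x0| + |C|) ≤ f (cw 1 (fun _ => ⟨0, hd⟩) y) := by
      have := (abs_le.mp hfb).1; linarith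
    have h2 : beta f ≤ |beta f| := le_abs_self _
    linarith
  · have h2 : (0:ℝ) ≤ |f x0| + |C| := by positivity
    have h3 : (0:ℝ) ≤ |beta f| := abs_nonneg _
    linarith

lemma key_ineq (hd : 0 < d) (hθ0 : 0 < θ) (hθ1 : θ < 1) {f : X d → ℝ} (hf : LipWrt θ C f)
    (y : X d) : f y - beta f ≤ uu f (shift y) - uu f y := by
  haveI := wd_nonempty (d := d) hd
  have hstep : ∀ p : Wd d, phi f p y + (f y - beta f) ≤ uu f (shift y) := by
    intro p
    set w' : Fin (p.1 + 1 + 1) → Fin d :=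
      fun i => if h : i.val < p.1 + 1 then p.2 ⟨i.val, h⟩ else y 0 with hw'
    have hcw : cw (p.1 + 2) w' (shift y) = cw (p.1 + 1) p.2 y := by
      funext i
      rcases Nat.lt_or_ge i (p.1 + 1) with hc | hc
      · rw [cw_lt p.2 y hc, cw_lt w' (shift y) (show i < p.1 + 2 by omega)]
        simp only [hw']
        rw [dif_pos hc]
      · rw [cw_ge p.2 y hc]
        rcases Nat.lt_or_ge i (p.1 + 2) with hc2 | hc2
        · rw [cw_lt w' (shift y) hc2]
          simp only [hw']
          rw [dif_neg (by omega)]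
          congr 1
          omega
        · rw [cw_ge w' (shift y) hc2]
          show y (i - (p.1 + 2) + 1) = y (i - (p.1 + 1))
          congr 1
          omega
    have hphi : phi f ⟨p.1 + 1, w'⟩ (shift y) = phi f p y + (f y - beta f) := by
      unfold phi
      show birkhoff f (p.1 + 1 + 1) (cw (p.1 + 2) w' (shift y)) - _ = _
      rw [hcw, birkhoff, Finset.sum_range_succ, ← birkhoff, shift_iter_cw]
      push_cast
      ring
    calc phi f p y + (f y - beta f) = phi f ⟨p.1 + 1, w'⟩ (shift y) := hphi.symm
      _ ≤ uu f (shift y) := le_uu hd hθ0 hθ1 hf _ _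
  have h1 : uu f y ≤ uu f (shift y) - (f y - beta f) :=
    ciSup_le fun p => by have := hstep p; linarith
  linarith

end Stmt10Aux

namespace Stmt10Aux

variable {d : ℕ} {θ C : ℝ}

lemma pm_pos {n : ℕ} (hn : 0 < n) (x : X d) (U : Set (X d)) (hxU : x ∈ U) :
    0 < pm n x U := by
  have h1 : Measure.dirac x U = 1 := by
    rw [Measure.dirac_apply, Set.indicator_of_mem hxU, Pi.one_apply]
  have h2 := Finset.single_le_sum (f := fun i => Measure.dirac (shift^[i] x) U)
      (fun i _ => zero_le) (Finset.mem_range.mpr hn)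
  simp only [Function.iterate_zero, id_eq] at h2
  have h3 : (1:ℝ≥0∞) ≤ ∑ i ∈ Finset.range n, Measure.dirac (shift^[i] x) U := by
    rw [← h1]; exact h2
  have h5 : pm n x U = ((n : ℝ≥0∞))⁻¹ * ∑ i ∈ Finset.range n, Measure.dirac (shift^[i] x) U := by
    rw [pm, Measure.smul_apply, Measure.finset_sum_apply, smul_eq_mul]
  rw [h5]
  calc (0:ℝ≥0∞) < ((n : ℝ≥0∞))⁻¹ * 1 := by
        rw [mul_one]
        exact ENNReal.inv_pos.mpr (ENNReal.natCast_ne_top n)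
    _ ≤ _ := mul_le_mul_right h3 _

lemma reverse (hd : 0 < d) (hθ0 : 0 < θ) (hθ1 : θ < 1) {f : X d → ℝ} (hf : LipWrt θ C f)
    {x : X d} (μ : Measure (X d)) (hμp : IsProbabilityMeasure μ) (hμi : μ.map shift = μ)
    (hμf : ∫ y, f y ∂μ = beta f)
    (hsupp : ∀ U : Set (X d), IsOpen U → x ∈ U → 0 < μ U) (n : ℕ) (hxn : shift^[n] x = x) :
    birkhoff f n x = n * beta f := by
  haveI := hμp
  have hfc := lip_continuous hθ0 hθ1 hf
  have huLip := uu_lip hd hθ0 hθ1 hf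
  have huc := lip_continuous hθ0 hθ1 huLip
  set g : X d → ℝ := fun y => (beta f - f y) + (uu f (shift y) - uu f y) with hg
  have hg0 : ∀ y, 0 ≤ g y := fun y => by
    have := key_ineq hd hθ0 hθ1 hf y
    simp only [hg]
    linarith
  have hgc : Continuous g :=
    (continuous_const.sub hfc).add ((huc.comp shift_continuous).sub huc)
  have hfint : Integrable f μ :=
    ⟨hfc.aestronglyMeasurable, HasFiniteIntegral.of_bounded (C := |f x| + |C|)
      (ae_of_all _ fun y => by rw [Real.norm_eq_abs]; exact lip_bound hθ0 hθ1 hf x y)⟩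
  set B : ℝ := |C| * (θ / (1 - θ)) + (|f x| + |C|) + |beta f| with hB
  have huint : Integrable (uu f) μ :=
    ⟨huc.aestronglyMeasurable, HasFiniteIntegral.of_bounded (C := B)
      (ae_of_all _ fun y => by rw [Real.norm_eq_abs]; exact uu_bound hd hθ0 hθ1 hf x y)⟩
  have huσint : Integrable (fun y => uu f (shift y)) μ :=
    ⟨(huc.comp shift_continuous).aestronglyMeasurable, HasFiniteIntegral.of_bounded (C := B)
      (ae_of_all _ fun y => by rw [Real.norm_eq_abs]; exact uu_bound hd hθ0 hθ1 hf x _)⟩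
  have hmapu : ∫ y, uu f (shift y) ∂μ = ∫ y, uu f y ∂μ := by
    have h := integral_map (φ := shift) (μ := μ) shift_measurable.aemeasurable
      huc.aestronglyMeasurable
    rw [hμi] at h
    exact h.symm
  have hgint : Integrable g μ := ((integrable_const _).sub hfint).add (huσint.sub huint)
  have hgzero_int : ∫ y, g y ∂μ = 0 := by
    have e1 : Integrable (fun y => beta f - f y) μ := (integrable_const _).sub hfint
    have e2 : Integrable (fun y => uu f (shift y) - uu f y) μ := huσint.sub huint
    have e3 : Integrable (fun _ : X d => beta f) μ := integrable_const _
    simp only [hg]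
    rw [integral_add e1 e2, integral_sub e3 hfint, integral_sub huσint huint,
      integral_const, hmapu, hμf]
    simp [measure_univ]
  have hae := (integral_eq_zero_iff_of_nonneg (fun y => hg0 y) hgint).mp hgzero_int
  have h0 : μ {y | g y ≠ 0} = 0 := by
    rw [Filter.EventuallyEq] at hae
    simpa [ae_iff] using hae
  have hUset : {y : X d | g y ≠ 0} = g ⁻¹' ({0}ᶜ) := rfl
  have hU : IsOpen {y : X d | g y ≠ 0} := by
    rw [hUset]
    exact hgc.isOpen_preimage _ isOpen_compl_singleton
  have hmap : ∀ i : ℕ, μ.map (shift^[i]) = μ := by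
    intro i
    induction i with
    | zero => simp
    | succ i ih =>
        rw [Function.iterate_succ',
          ← Measure.map_map shift_measurable (shift_measurable.iterate i), ih, hμi]
  have hgx : ∀ i : ℕ, g (shift^[i] x) = 0 := by
    intro i
    by_contra hne
    have hVopen : IsOpen ((shift^[i]) ⁻¹' {y | g y ≠ 0}) :=
      hU.preimage (shift_continuous.iterate i)
    have hxV : x ∈ (shift^[i]) ⁻¹' {y | g y ≠ 0} := hne
    have hpos := hsupp _ hVopen hxV
    have heq : μ ((shift^[i]) ⁻¹' {y | g y ≠ 0}) = μ {y | g y ≠ 0} := by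
      conv_rhs => rw [← hmap i]
      rw [Measure.map_apply (shift_measurable.iterate i) hU.measurableSet]
    rw [heq, h0] at hpos
    exact lt_irrefl 0 hpos
  have hsum : ∑ i ∈ Finset.range n, g (shift^[i] x) = 0 :=
    Finset.sum_eq_zero fun i _ => hgx i
  have hexp : ∑ i ∈ Finset.range n, g (shift^[i] x)
      = ((n : ℝ) * beta f - birkhoff f n x)
        + (uu f (shift^[n] x) - uu f (shift^[0] x)) := by
    have h1 : ∀ i ∈ Finset.range n, g (shift^[i] x)
        = (beta f - f (shift^[i] x)) + (uu f (shift^[i + 1] x) - uu f (shift^[i] x)) := by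
      intro i _
      simp only [hg]
      rw [Function.iterate_succ_apply' shift i x]
    rw [Finset.sum_congr rfl h1, Finset.sum_add_distrib, Finset.sum_sub_distrib,
      Finset.sum_const, Finset.card_range, Finset.sum_range_sub (fun i => uu f (shift^[i] x)),
      ← birkhoff]
    push_cast
    ring
  rw [hxn] at hexp
  have hx0 : shift^[0] x = x := rfl
  rw [hx0] at hexp
  have : ((n : ℝ) * beta f - birkhoff f n x) + (uu f x - uu f x) = 0 := by
    rw [← hexp]; exact hsum
  linarith

end Stmt10Aux


open Stmt10Aux in
theorem stmt10 (d : ℕ) (hd : 0 < d) (θ C : ℝ) (hθ0 : 0 < θ) (hθ1 : θ < 1)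
    (f : X d → ℝ) (hf : LipWrt θ C f) (x : X d) (hx : IsPeriodic x) :
    (Ifun f x = 0 ↔ ∫ y, f y ∂(orbitMeasure x) = beta f) ∧
    ((∫ y, f y ∂(orbitMeasure x) = beta f) ↔
      ∃ μ : Measure (X d), IsProbabilityMeasure μ ∧ μ.map shift = μ ∧
        (∫ y, f y ∂μ) = beta f ∧ ∀ U : Set (X d), IsOpen U → x ∈ U → 0 < μ U) := by
  obtain ⟨m, hm, hxm⟩ := hx
  have hmem : x ∈ Function.periodicPts shift := ⟨m, hm, hxm⟩
  have hn : 0 < minPer x := Function.minimalPeriod_pos_of_mem_periodicPts hmem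
  set n := minPer x with hndef
  have hxn : shift^[n] x = x := Function.isPeriodicPt_minimalPeriod shift x
  have hfc := lip_continuous hθ0 hθ1 hf
  have hval : ∫ y, f y ∂(orbitMeasure x) = birkhoff f n x / n := by
    rw [orbitMeasure_eq]
    exact pm_integral hn x hfc
  have hnR : (0:ℝ) < n := by exact_mod_cast hn
  constructor
  · rw [hval, Ifun, ← hndef]
    constructor
    · intro h
      rw [div_eq_iff hnR.ne']
      linarith
    · intro h
      rw [div_eq_iff hnR.ne'] at h
      linarith
  · constructor
    · intro h
      refine ⟨pm n x, pm_prob hn x, pm_invariant hn hxn, ?_, ?_⟩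
      · rw [← orbitMeasure_eq x]; exact h
      · exact fun U hU hxU => pm_pos hn x U hxU
    · rintro ⟨μ, hμp, hμi, hμf, hsupp⟩
      have hbk := reverse hd hθ0 hθ1 hf μ hμp hμi hμf hsupp n hxn
      rw [hval, hbk]
      field_simp
end
end
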